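/- Let n ≥ 2, let a = (a_1,…,a_{n−1}), b = (b_1,…,b_{n−1}) ∈ ℤ^{n−1} and x ∈ ℤ. Then ∏_{i=1}^{n−1} (b_i − a_i + 1) = Σ_{ε ∈ {0,1}^{n−1}} (−1)^{ε_1+⋯+ε_{n−1}} · (∏_{i=1}^{n−2} (m_{i+1} − m_i + 1)) · (x − m_{n−1} + 1), where m_i = a_i if ε_i = 0 and m_i = b_i + 1 if ε_i = 1 (this is an identity of integers, valid for all choices of a, b, x). -/

import Mathlib

lemma sign_prod (n : ℕ) (ε : Fin n → Bool) :
    (-1 : ℤ) ^ (Finset.univ.filter fun i => ε i = true).card =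
      ∏ i : Fin n, (if ε i then (-1 : ℤ) else 1) := by
  rw [Finset.prod_ite, Finset.prod_const, Finset.prod_const, one_pow, mul_one]

/-- The signed-size identity underlying the sijection of Problem 2: for `n ≥ 2`,
`a, b ∈ ℤ^{n-1}` and `x ∈ ℤ`, the size `∏_i (b_i - a_i + 1)` of the signed box
`[a_1,b_1] × ⋯ × [a_{n-1},b_{n-1}]` equals the signed sum over the `2^{n-1}` corner
choices `m` (with `m_i = a_i` or `m_i = b_i + 1`) of the size of the box
`[m_1,m_2] × ⋯ × [m_{n-2},m_{n-1}] × [m_{n-1},x]`. -/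
theorem signed_box_corners (n : ℕ) (a b : Fin (n + 1) → ℤ) (x : ℤ) :
    (∏ i : Fin (n + 1), (b i - a i + 1)) =
      ∑ ε : Fin (n + 1) → Bool,
        (-1 : ℤ) ^ (Finset.univ.filter fun i => ε i = true).card *
          ((∏ i : Fin n,
            ((if ε i.succ then b i.succ + 1 else a i.succ) -
              (if ε i.castSucc then b i.castSucc + 1 else a i.castSucc) + 1)) *
          (x - (if ε (Fin.last n) then b (Fin.last n) + 1 else a (Fin.last n)) + 1)) := by
  induction n generalizing x with
  | zero =>
    rw [← Equiv.sum_comp (Equiv.funUnique (Fin 1) Bool).symm, Fintype.sum_bool]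
    simp only [Equiv.funUnique, Equiv.symm, Equiv.coe_fn_mk, Fin.prod_univ_zero,
      Fin.prod_univ_one, if_true, if_false]
    norm_num [Fin.last, Fin.prod_univ_succ]
    ring
  | succ n ih =>
    set A := a (Fin.last (n + 1)) with hA
    set B := b (Fin.last (n + 1)) with hB
    rw [← Fintype.sum_equiv (Fin.snocEquiv (fun _ => Bool)) _ _ (fun p => rfl),
      Fintype.sum_prod_type, Fintype.sum_bool, ← Finset.sum_add_distrib]
    have trans1 : (∏ i : Fin (n + 2), (b i - a i + 1)) =
        (B - A + 1) * ∏ i : Fin (n + 1), (b i.castSucc - a i.castSucc + 1) := by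
      rw [Fin.prod_univ_castSucc]; ring
    rw [trans1, ih (fun i => a i.castSucc) (fun i => b i.castSucc) (A + B - x),
      Finset.mul_sum]
    refine Finset.sum_congr rfl fun ε _ => ?_
    simp only [Fin.snocEquiv, Equiv.coe_fn_mk]
    have hP : ∀ c : Bool, (∏ i : Fin (n + 1),
        ((if (Fin.snoc ε c : Fin (n + 2) → Bool) i.succ then b i.succ + 1 else a i.succ) -
          (if (Fin.snoc ε c : Fin (n + 2) → Bool) i.castSucc then b i.castSucc + 1
            else a i.castSucc) + 1)) =
        (∏ i : Fin n,
          ((if ε i.succ then b i.succ.castSucc + 1 else a i.succ.castSucc) -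
            (if ε i.castSucc then b i.castSucc.castSucc + 1 else a i.castSucc.castSucc) + 1)) *
        ((if c then B + 1 else A) -
          (if ε (Fin.last n) then b (Fin.last n).castSucc + 1 else a (Fin.last n).castSucc) + 1)
        := by
      intro c
      rw [Fin.prod_univ_castSucc]
      congr 1
      · refine Finset.prod_congr rfl fun i _ => ?_
        simp only [Fin.succ_castSucc, Fin.snoc_castSucc]
      · rw [Fin.succ_last, Fin.snoc_last, Fin.snoc_castSucc, hA, hB]
    have hsgn : ∀ c : Bool, (-1 : ℤ) ^ (Finset.univ.filter fun i =>
        (Fin.snoc ε c : Fin (n + 2) → Bool) i = true).card =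
        (if c then (-1 : ℤ) else 1) *
          (-1 : ℤ) ^ (Finset.univ.filter fun i => ε i = true).card := by
      intro c
      rw [sign_prod, sign_prod, Fin.prod_univ_castSucc, Fin.snoc_last, mul_comm]
      congr 1
      exact Finset.prod_congr rfl fun i _ => by rw [Fin.snoc_castSucc]
    have hlast : ∀ c : Bool, (Fin.snoc ε c : Fin (n + 2) → Bool) (Fin.last (n + 1)) = c :=
      fun c => Fin.snoc_last _ _
    erw [hP true, hP false, hsgn true, hsgn false]
    simp only [hlast]
    cases h : ε (Fin.last n) <;> simp [h] <;> ring
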